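/- Let A and B be parity automata over finite alphabet Σ with B deterministic and complete, and let L_{A,B} be their disjoint union with v(x)=s_A, v(y)=s_B the two initial states. For priorities n (of A) and m (of B) let φ_{n,m} := ⟨synch⟩* νZ. ⟨synch'⟩⁺( prty_n(x) ∧ ⟨synch'⟩⁺( prty_m(y) ∧ Z ) ), where ⟨synch⟩φ := ⋁_{a∈Σ}⟨a⟩_x⟨a⟩_y φ and ⟨synch'⟩⁺φ := μZ'. ⟨synch⟩( prty_{≤n}(x) ∧ prty_{≤m}(y) ∧ (φ ∨ Z') ). Then L(A) ⊄ L(B) if and only if there exist an even n and an odd m such that L_{A,B}, v ⊨ φ_{n,m}. -/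

import Mathlib

/-- A labeled transition system over edge labels `Λ` and atomic propositions `P`. -/
structure LTS (Λ P : Type) where
  S : Type
  s0 : S
  Tr : S → Λ → S → Prop
  rho : S → Set P

/-- Formulas of the higher-dimensional modal μ-calculus Lμω. -/
inductive Formula (Λ P V V2 : Type) : Type
  | prop : P → V → Formula Λ P V V2
  | svar : V2 → Formula Λ P V V2
  | neg : Formula Λ P V V2 → Formula Λ P V V2
  | and : Formula Λ P V V2 → Formula Λ P V V2 → Formula Λ P V V2
  | dia : Λ → V → Formula Λ P V V2 → Formula Λ P V V2
  | mu : V2 → Formula Λ P V V2 → Formula Λ P V V2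
  | repl : (V → V) → Formula Λ P V V2 → Formula Λ P V V2

variable {Λ P V V2 : Type}

/-- Semantics of Lμω : a set of first-order valuations. -/
def sem [DecidableEq V] [DecidableEq V2] (L : LTS Λ P) :
    Formula Λ P V V2 → (V2 → Set (V → L.S)) → Set (V → L.S)
  | .prop p x, _ => {v | p ∈ L.rho (v x)}
  | .svar X, 𝒱 => 𝒱 X
  | .neg φ, 𝒱 => (sem L φ 𝒱)ᶜ
  | .and φ ψ, 𝒱 => sem L φ 𝒱 ∩ sem L ψ 𝒱
  | .dia a x φ, 𝒱 => {v | ∃ s, L.Tr (v x) a s ∧ Function.update v x s ∈ sem L φ 𝒱}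
  | .mu X φ, 𝒱 => ⋂₀ {Q | sem L φ (Function.update 𝒱 X Q) ⊆ Q}
  | .repl κ φ, 𝒱 => {v | (fun z => v (κ z)) ∈ sem L φ 𝒱}

/-- Derived operator: disjunction. -/
def Formula.or (φ ψ : Formula Λ P V V2) : Formula Λ P V V2 := .neg (.and (.neg φ) (.neg ψ))

/-- Derived operator: box modality. -/
def Formula.box (a : Λ) (x : V) (φ : Formula Λ P V V2) : Formula Λ P V V2 :=
  .neg (.dia a x (.neg φ))

/-- Replace every occurrence of the second-order variable `X` by `¬X`. -/
def Formula.substNeg [DecidableEq V2] (X : V2) : Formula Λ P V V2 → Formula Λ P V V2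
  | .prop p x => .prop p x
  | .svar Y => if Y = X then .neg (.svar Y) else .svar Y
  | .neg φ => .neg (φ.substNeg X)
  | .and φ ψ => .and (φ.substNeg X) (ψ.substNeg X)
  | .dia a x φ => .dia a x (φ.substNeg X)
  | .mu Y φ => .mu Y (φ.substNeg X)
  | .repl κ φ => .repl κ (φ.substNeg X)

/-- Derived operator: greatest fixed point, `νX.φ := ¬μX.¬φ[X:=¬X]`. -/
def Formula.nu [DecidableEq V2] (X : V2) (φ : Formula Λ P V V2) : Formula Λ P V V2 :=
  .neg (.mu X (.neg (φ.substNeg X)))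

/-- Falsity, definable as `μX.X`. -/
def Formula.bot (X : V2) : Formula Λ P V V2 := .mu X (.svar X)

/-- Truth. -/
def Formula.top (X : V2) : Formula Λ P V V2 := .neg (.bot X)

/-- Finite conjunction (`X` is a dummy second-order variable for the empty case). -/
def bigAnd (X : V2) (l : List (Formula Λ P V V2)) : Formula Λ P V V2 := l.foldr .and (.top X)

/-- Finite disjunction. -/
def bigOr (X : V2) (l : List (Formula Λ P V V2)) : Formula Λ P V V2 := l.foldr .or (.bot X)

/-- Derived operator: implication. -/
def Formula.imp (φ ψ : Formula Λ P V V2) : Formula Λ P V V2 := .neg (.and φ (.neg ψ))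

/-- Derived operator: bi-implication. -/
def Formula.iff (φ ψ : Formula Λ P V V2) : Formula Λ P V V2 := .and (φ.imp ψ) (ψ.imp φ)

/-- A run of the automaton (viewed as an LTS) on the infinite word `w`. -/
def IsRun {Alph P : Type} (A : LTS Alph P) (w : ℕ → Alph) (r : ℕ → A.S) : Prop :=
  r 0 = A.s0 ∧ ∀ i, A.Tr (r i) (w i) (r (i + 1))

/-- Determinism of an automaton. -/
def Deterministic {Alph P : Type} (A : LTS Alph P) : Prop :=
  ∀ s a t₁ t₂, A.Tr s a t₁ → A.Tr s a t₂ → t₁ = t₂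

/-- Completeness of an automaton. -/
def Complete {Alph P : Type} (A : LTS Alph P) : Prop :=
  ∀ s a, ∃ t, A.Tr s a t

/-- The disjoint union of two LTSs (with the initial state of the first one). -/
def dunion {Alph P : Type} (A B : LTS Alph P) : LTS Alph P where
  S := A.S ⊕ B.S
  s0 := .inl A.s0
  Tr := fun s a t =>
    match s, t with
    | .inl s, .inl t => A.Tr s a t
    | .inr s, .inr t => B.Tr s a t
    | _, _ => False
  rho := fun s => match s with | .inl s => A.rho s | .inr s => B.rho s

/-- `⟨synch⟩φ := ⋁_{a∈Σ} ⟨a⟩_x ⟨a⟩_y φ`, with `x`, `y` being the variables `0`, `1`. -/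
noncomputable def synch {Alph P : Type} [Fintype Alph] (φ : Formula Alph P (Fin 2) ℕ) :
    Formula Alph P (Fin 2) ℕ :=
  bigOr 9 ((Finset.univ : Finset Alph).toList.map fun a => .dia a 0 (.dia a 1 φ))

/-- A parity automaton is a finite LTS whose propositions are the priority predicates
`prty_k` (`k : ℕ`), every state being labeled with exactly one priority. -/
def IsParityAutomaton {Alph : Type} (A : LTS Alph ℕ) : Prop :=
  ∀ s : A.S, ∃ k : ℕ, A.rho s = {k}

/-- Priority `k` is visited infinitely often along the run `r`. -/
def InfOften {Alph : Type} (A : LTS Alph ℕ) (r : ℕ → A.S) (k : ℕ) : Prop :=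
  ∀ N, ∃ i, N ≤ i ∧ k ∈ A.rho (r i)

/-- The language of a parity automaton: words with some run along which the largest
priority visited infinitely often is even. -/
def ParityLang {Alph : Type} (A : LTS Alph ℕ) : Set (ℕ → Alph) :=
  {w | ∃ r, IsRun A w r ∧
    ∃ k, Even k ∧ InfOften A r k ∧ ∀ j, InfOften A r j → j ≤ k}

/-- `prty_{≤ n}(x) := prty_0(x) ∨ … ∨ prty_n(x)`. -/
def prtyLe {Alph : Type} (n : ℕ) (x : Fin 2) : Formula Alph ℕ (Fin 2) ℕ :=
  bigOr 9 ((List.range (n + 1)).map fun k => .prop k x)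

/-- `⟨synch'⟩⁺φ := μZ'. ⟨synch⟩( prty_{≤n}(x) ∧ prty_{≤m}(y) ∧ (φ ∨ Z') )`,
with `z` the index of the second-order variable `Z'`. -/
noncomputable def synchPlus {Alph : Type} [Fintype Alph] (z n m : ℕ)
    (φ : Formula Alph ℕ (Fin 2) ℕ) : Formula Alph ℕ (Fin 2) ℕ :=
  .mu z (synch (.and (prtyLe n 0) (.and (prtyLe m 1) (.or φ (.svar z)))))

/-- `φ_{n,m} := ⟨synch⟩* νZ.⟨synch'⟩⁺( prty_n(x) ∧ ⟨synch'⟩⁺( prty_m(y) ∧ Z ) )`,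
where `⟨synch⟩*ψ := μZ₀. ψ ∨ ⟨synch⟩Z₀`; here `Z = 0`, the two `Z'` are `1`, `2`,
and `Z₀ = 3`. -/
noncomputable def phiNM {Alph : Type} [Fintype Alph] (n m : ℕ) :
    Formula Alph ℕ (Fin 2) ℕ :=
  .mu 3 (.or
    (Formula.nu 0 (synchPlus 1 n m
      (.and (.prop n 0) (synchPlus 2 n m (.and (.prop m 1) (.svar 0))))))
    (synch (.svar 3)))


section Semantics

variable {Λ P : Type} (L : LTS Λ P)

lemma sem_neg [DecidableEq V] [DecidableEq V2] (φ : Formula Λ P V V2) (𝒱) :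
    sem L (.neg φ) 𝒱 = (sem L φ 𝒱)ᶜ := rfl

lemma sem_and [DecidableEq V] [DecidableEq V2] (φ ψ : Formula Λ P V V2) (𝒱) :
    sem L (.and φ ψ) 𝒱 = sem L φ 𝒱 ∩ sem L ψ 𝒱 := rfl

lemma sem_mu [DecidableEq V] [DecidableEq V2] (X : V2) (φ : Formula Λ P V V2) (𝒱) :
    sem L (.mu X φ) 𝒱 = ⋂₀ {Q | sem L φ (Function.update 𝒱 X Q) ⊆ Q} := rfl

lemma sem_or [DecidableEq V] [DecidableEq V2] (φ ψ : Formula Λ P V V2) (𝒱) :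
    sem L (φ.or ψ) 𝒱 = sem L φ 𝒱 ∪ sem L ψ 𝒱 := by
  simp [Formula.or, sem_neg, sem_and, Set.compl_inter]

lemma sem_bot [DecidableEq V] [DecidableEq V2] (X : V2) (𝒱) :
    sem L (Formula.bot X : Formula Λ P V V2) 𝒱 = ∅ := by
  apply Set.eq_empty_iff_forall_notMem.2
  intro v hv
  have := Set.mem_sInter.1 hv ∅ (by simp [Formula.bot, sem, Function.update_self])
  exact this

lemma mem_sem_bigOr [DecidableEq V] [DecidableEq V2] (X : V2) (l : List (Formula Λ P V V2))
    (𝒱) (v) : v ∈ sem L (bigOr X l) 𝒱 ↔ ∃ φ ∈ l, v ∈ sem L φ 𝒱 := by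
  induction l with
  | nil => simp [bigOr, sem_bot]
  | cons φ l ih => simp only [bigOr, List.foldr, sem_or, Set.mem_union, List.mem_cons]; rw [show List.foldr Formula.or (Formula.bot X) l = bigOr X l from rfl, ih]; aesop

lemma val_ext {S : Type} (u w : Fin 2 → S) (h0 : u 0 = w 0) (h1 : u 1 = w 1) : u = w := by
  funext i
  fin_cases i <;> assumption

lemma mem_sem_synch {Alph : Type} [Fintype Alph] (L : LTS Alph P)
    (φ : Formula Alph P (Fin 2) ℕ) (𝒱) (v) :
    v ∈ sem L (synch φ) 𝒱 ↔
      ∃ (a : Alph) (w : Fin 2 → L.S), L.Tr (v 0) a (w 0) ∧ L.Tr (v 1) a (w 1) ∧ w ∈ sem L φ 𝒱 := by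
  rw [synch, mem_sem_bigOr]
  constructor
  · rintro ⟨ψ, hψ, hv⟩
    simp only [List.mem_map] at hψ
    obtain ⟨a, -, rfl⟩ := hψ
    obtain ⟨s, hs, hv⟩ := hv
    obtain ⟨t, ht, hv⟩ := hv
    refine ⟨a, Function.update (Function.update v 0 s) 1 t, ?_, ?_, hv⟩
    · simpa using hs
    · simpa using ht
  · rintro ⟨a, w, h0, h1, hw⟩
    refine ⟨.dia a 0 (.dia a 1 φ), by simp, ?_⟩
    refine ⟨w 0, h0, w 1, by simpa using h1, ?_⟩
    rwa [val_ext (Function.update (Function.update v 0 (w 0)) 1 (w 1)) w (by simp) (by simp)]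

lemma mem_sem_prtyLe {Alph : Type} (L : LTS Alph ℕ) (n : ℕ) (x : Fin 2) (𝒱) (v) :
    v ∈ sem L (prtyLe n x) 𝒱 ↔ ∃ k ≤ n, k ∈ L.rho (v x) := by
  rw [prtyLe, mem_sem_bigOr]
  constructor
  · rintro ⟨ψ, hψ, hv⟩
    simp only [List.mem_map, List.mem_range] at hψ
    obtain ⟨k, hk, rfl⟩ := hψ
    exact ⟨k, Nat.lt_succ_iff.1 hk, hv⟩
  · rintro ⟨k, hk, hv⟩
    exact ⟨.prop k x, by simp [List.mem_map, Nat.lt_succ_iff, hk], hv⟩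

/-- `X` is not bound by any `μ` in the formula. -/
def NoBind [DecidableEq V2] (X : V2) : Formula Λ P V V2 → Prop
  | .prop _ _ => True
  | .svar _ => True
  | .neg φ => NoBind X φ
  | .and φ ψ => NoBind X φ ∧ NoBind X ψ
  | .dia _ _ φ => NoBind X φ
  | .mu Y φ => Y ≠ X ∧ NoBind X φ
  | .repl _ φ => NoBind X φ

lemma sem_substNeg [DecidableEq V] [DecidableEq V2] (X : V2) (φ : Formula Λ P V V2)
    (h : NoBind X φ) (𝒱) :
    sem L (φ.substNeg X) 𝒱 = sem L φ (Function.update 𝒱 X ((𝒱 X)ᶜ)) := by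
  induction φ generalizing 𝒱 with
  | prop p x => rfl
  | svar Y =>
    by_cases hY : Y = X
    · subst hY; simp [Formula.substNeg, sem_neg, sem, Function.update_self]
    · simp [Formula.substNeg, hY, sem, Function.update_of_ne hY]
  | neg φ ih => simp only [Formula.substNeg, sem_neg, ih h]
  | and φ ψ ihφ ihψ =>
    simp only [Formula.substNeg, sem_and, ihφ h.1, ihψ h.2]
  | dia a x φ ih =>
    simp only [Formula.substNeg, sem]
    ext v; simp only [Set.mem_setOf_eq, ih h]
  | mu Y φ ih =>
    obtain ⟨hY, hφ⟩ := h
    simp only [Formula.substNeg, sem_mu]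
    apply congrArg
    ext Q
    simp only [Set.mem_setOf_eq]
    rw [ih hφ, Function.update_of_ne (Ne.symm hY), Function.update_comm (Ne.symm hY)]
  | repl κ φ ih =>
    simp only [Formula.substNeg, sem]
    ext v; simp only [Set.mem_setOf_eq, ih h]

end Semantics

section Chars

variable {Alph : Type} [Fintype Alph] (L : LTS Alph ℕ)

/-- One synchronized step. -/
def SStep (v w : Fin 2 → L.S) : Prop :=
  ∃ a, L.Tr (v 0) a (w 0) ∧ L.Tr (v 1) a (w 1)

/-- One synchronized step whose target has priorities bounded by `n` and `m`. -/
def BStep (n m : ℕ) (v w : Fin 2 → L.S) : Prop :=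
  SStep L v w ∧ (∃ k ≤ n, k ∈ L.rho (w 0)) ∧ ∃ k ≤ m, k ∈ L.rho (w 1)

lemma sem_synchPlus (z n m : ℕ) (φ : Formula Alph ℕ (Fin 2) ℕ) (𝒱)
    (hφ : ∀ Q, sem L φ (Function.update 𝒱 z Q) = sem L φ 𝒱) :
    sem L (synchPlus z n m φ) 𝒱 =
      {v | ∃ w, Relation.TransGen (BStep L n m) v w ∧ w ∈ sem L φ 𝒱} := by
  have hbody : ∀ Q, sem L (synch (.and (prtyLe n 0) (.and (prtyLe m 1) (.or φ (.svar z)))))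
      (Function.update 𝒱 z Q) = {v | ∃ w, BStep L n m v w ∧ (w ∈ sem L φ 𝒱 ∨ w ∈ Q)} := by
    intro Q
    ext v
    rw [mem_sem_synch]
    constructor
    · rintro ⟨a, w, h0, h1, hw⟩
      rw [sem_and, sem_and] at hw
      obtain ⟨hp0, hp1, hor⟩ := hw
      rw [sem_or] at hor
      refine ⟨w, ⟨⟨a, h0, h1⟩, (mem_sem_prtyLe L n 0 _ w).1 hp0,
        (mem_sem_prtyLe L m 1 _ w).1 hp1⟩, ?_⟩
      rcases hor with h | h
      · left; rwa [hφ Q] at h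
      · right; simpa [sem, Function.update_self] using h
    · rintro ⟨w, ⟨⟨a, h0, h1⟩, hb0, hb1⟩, hor⟩
      refine ⟨a, w, h0, h1, ?_⟩
      rw [sem_and, sem_and, sem_or]
      refine ⟨(mem_sem_prtyLe L n 0 _ w).2 hb0, (mem_sem_prtyLe L m 1 _ w).2 hb1, ?_⟩
      rcases hor with h | h
      · left; rwa [hφ Q]
      · right; simpa [sem, Function.update_self]
  rw [synchPlus, sem_mu]
  apply subset_antisymm
  · intro v hv
    exact Set.mem_sInter.1 hv _ (by
      simp only [Set.mem_setOf_eq]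
      rw [hbody]
      rintro u ⟨w, hstep, h⟩
      rcases h with h | h
      · exact ⟨w, Relation.TransGen.single hstep, h⟩
      · obtain ⟨w', htg, hw'⟩ := h
        exact ⟨w', Relation.TransGen.head hstep htg, hw'⟩)
  · rintro v ⟨w, htg, hw⟩
    intro Q hQ
    simp only [Set.mem_setOf_eq] at hQ
    rw [hbody] at hQ
    induction htg using Relation.TransGen.head_induction_on with
    | single h => exact hQ ⟨_, h, Or.inl hw⟩
    | head h _ ihq => exact hQ ⟨_, h, Or.inr ihq⟩

/-- The "good loop" relation of `φ_{n,m}`. -/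
def GRel (n m : ℕ) (v w : Fin 2 → L.S) : Prop :=
  ∃ u, Relation.TransGen (BStep L n m) v u ∧ n ∈ L.rho (u 0) ∧
    Relation.TransGen (BStep L n m) u w ∧ m ∈ L.rho (w 1)

lemma sem_inner (n m : ℕ) (𝒱) :
    sem L (.and (.prop n 0) (synchPlus 2 n m (.and (.prop m 1) (.svar 0))) :
        Formula Alph ℕ (Fin 2) ℕ) 𝒱 =
      {v | n ∈ L.rho (v 0) ∧ ∃ w, Relation.TransGen (BStep L n m) v w ∧
        m ∈ L.rho (w 1) ∧ w ∈ 𝒱 0} := by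
  rw [sem_and, sem_synchPlus]
  · ext v
    simp only [Set.mem_inter_iff, Set.mem_setOf_eq, sem]
  · intro Q
    ext w
    simp [sem, Function.update_of_ne (show (0:ℕ) ≠ 2 by norm_num)]

lemma sem_psi (n m : ℕ) (𝒱) :
    sem L (synchPlus 1 n m (.and (.prop n 0)
        (synchPlus 2 n m (.and (.prop m 1) (.svar 0)))) : Formula Alph ℕ (Fin 2) ℕ) 𝒱 =
      {v | ∃ w, GRel L n m v w ∧ w ∈ 𝒱 0} := by
  rw [sem_synchPlus]
  · rw [sem_inner]
    ext v
    simp only [Set.mem_setOf_eq, GRel]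
    constructor
    · rintro ⟨u, h1, h2, w, h3, h4, h5⟩
      exact ⟨w, ⟨u, h1, h2, h3, h4⟩, h5⟩
    · rintro ⟨w, ⟨u, h1, h2, h3, h4⟩, h5⟩
      exact ⟨u, h1, h2, w, h3, h4, h5⟩
  · intro Q
    rw [sem_inner, sem_inner]
    simp [Function.update_of_ne (show (0:ℕ) ≠ 1 by norm_num)]

lemma noBind_bigOr [DecidableEq V2] (X Y : V2) (hY : Y ≠ X) (l : List (Formula Λ P V V2))
    (h : ∀ φ ∈ l, NoBind X φ) : NoBind X (bigOr Y l) := by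
  induction l with
  | nil => exact ⟨hY, trivial⟩
  | cons φ l ih => exact ⟨h φ (by simp), ih fun ψ hψ => h ψ (by simp [hψ])⟩

lemma noBind_prtyLe (X n : ℕ) (hX : X ≠ 9) (x : Fin 2) :
    NoBind X (prtyLe n x : Formula Alph ℕ (Fin 2) ℕ) := by
  apply noBind_bigOr _ _ (Ne.symm hX)
  intro φ hφ
  simp only [List.mem_map] at hφ
  obtain ⟨k, -, rfl⟩ := hφ
  trivial

lemma noBind_synch (X : ℕ) (hX : X ≠ 9) (φ : Formula Alph ℕ (Fin 2) ℕ)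
    (h : NoBind X φ) : NoBind X (synch φ) := by
  apply noBind_bigOr _ _ (Ne.symm hX)
  intro ψ hψ
  simp only [List.mem_map] at hψ
  obtain ⟨a, -, rfl⟩ := hψ
  exact h

lemma noBind_synchPlus (X z n m : ℕ) (hX : X ≠ 9) (hz : z ≠ X)
    (φ : Formula Alph ℕ (Fin 2) ℕ) (h : NoBind X φ) :
    NoBind X (synchPlus z n m φ) := by
  refine ⟨hz, ?_⟩
  apply noBind_synch _ hX
  exact ⟨noBind_prtyLe X n hX 0, noBind_prtyLe X m hX 1, h, trivial⟩

lemma sem_nu_psi (n m : ℕ) (𝒱) :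
    sem L (Formula.nu 0 (synchPlus 1 n m (.and (.prop n 0)
        (synchPlus 2 n m (.and (.prop m 1) (.svar 0))))) : Formula Alph ℕ (Fin 2) ℕ) 𝒱 =
      {v | ∃ c : ℕ → (Fin 2 → L.S), c 0 = v ∧ ∀ j, GRel L n m (c j) (c (j + 1))} := by
  have hnb : NoBind 0 (synchPlus 1 n m (.and (.prop n 0)
      (synchPlus 2 n m (.and (.prop m 1) (.svar 0)))) : Formula Alph ℕ (Fin 2) ℕ) := by
    apply noBind_synchPlus 0 1 n m (by norm_num) (by norm_num)
    exact ⟨trivial, noBind_synchPlus 0 2 n m (by norm_num) (by norm_num) _ ⟨trivial, trivial⟩⟩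
  have hsub : ∀ Q : Set (Fin 2 → L.S),
      sem L ((synchPlus 1 n m (.and (.prop n 0)
        (synchPlus 2 n m (.and (.prop m 1) (.svar 0))))).substNeg 0)
        (Function.update 𝒱 0 Q) = {v | ∃ w, GRel L n m v w ∧ w ∉ Q} := by
    intro Q
    rw [sem_substNeg L 0 _ hnb, Function.update_idem, sem_psi]
    simp [Function.update_self]
  rw [Formula.nu, sem_neg, sem_mu]
  ext v
  simp only [Set.mem_compl_iff, Set.mem_sInter, not_forall, Set.mem_setOf_eq]
  constructor
  · rintro ⟨Q, hQ, hv⟩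
    simp only [Set.mem_setOf_eq, sem_neg, hsub Q] at hQ
    have hP : ∀ x ∉ Q, ∃ w, GRel L n m x w ∧ w ∉ Q := by
      intro x hx
      by_contra hcon
      push_neg at hcon
      apply hx
      apply hQ
      simp only [Set.mem_compl_iff, Set.mem_setOf_eq, not_exists, not_and, not_not]
      exact hcon
    have key : ∀ x : {y : Fin 2 → L.S // y ∉ Q}, ∃ w : {y : Fin 2 → L.S // y ∉ Q},
        GRel L n m x.1 w.1 := by
      rintro ⟨x, hx⟩
      obtain ⟨w, h1, h2⟩ := hP x hx
      exact ⟨⟨w, h2⟩, h1⟩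
    choose g hg using key
    refine ⟨fun j => (g^[j] ⟨v, hv⟩).1, by simp, fun j => ?_⟩
    show GRel L n m (g^[j] ⟨v, hv⟩).1 (g^[j + 1] ⟨v, hv⟩).1
    rw [Function.iterate_succ_apply']
    exact hg _
  · rintro ⟨c, rfl, hc⟩
    refine ⟨(Set.range c)ᶜ, ?_, fun h => h ⟨0, rfl⟩⟩
    simp only [Set.mem_setOf_eq, sem_neg, hsub]
    intro x hx
    simp only [Set.mem_compl_iff, Set.mem_setOf_eq, not_exists, not_and, not_not] at hx
    simp only [Set.mem_compl_iff, Set.mem_range, not_exists]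
    rintro j rfl
    exact hx (c (j + 1)) (hc j) ⟨j + 1, rfl⟩

lemma mem_sem_phiNM (n m : ℕ) (𝒱) (v) :
    v ∈ sem L (phiNM n m : Formula Alph ℕ (Fin 2) ℕ) 𝒱 ↔
      ∃ u, Relation.ReflTransGen (SStep L) v u ∧
        ∃ c : ℕ → (Fin 2 → L.S), c 0 = u ∧ ∀ j, GRel L n m (c j) (c (j + 1)) := by
  set NU : Set (Fin 2 → L.S) :=
    {u | ∃ c : ℕ → (Fin 2 → L.S), c 0 = u ∧ ∀ j, GRel L n m (c j) (c (j + 1))} with hNU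
  have hbody : ∀ Q : Set (Fin 2 → L.S),
      sem L (.or (Formula.nu 0 (synchPlus 1 n m
          (.and (.prop n 0) (synchPlus 2 n m (.and (.prop m 1) (.svar 0))))))
        (synch (.svar 3)) : Formula Alph ℕ (Fin 2) ℕ) (Function.update 𝒱 3 Q) =
      NU ∪ {x | ∃ w, SStep L x w ∧ w ∈ Q} := by
    intro Q
    rw [sem_or, sem_nu_psi]
    congr 1
    ext x
    rw [mem_sem_synch]
    constructor
    · rintro ⟨a, w, h0, h1, hw⟩
      exact ⟨w, ⟨a, h0, h1⟩, by simpa [sem, Function.update_self] using hw⟩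
    · rintro ⟨w, ⟨a, h0, h1⟩, hw⟩
      exact ⟨a, w, h0, h1, by simpa [sem, Function.update_self] using hw⟩
  rw [phiNM, sem_mu]
  constructor
  · intro hv
    refine Set.mem_sInter.1 hv {x | ∃ u, Relation.ReflTransGen (SStep L) x u ∧ u ∈ NU} ?_
    simp only [Set.mem_setOf_eq]
    rw [hbody]
    rintro x (hx | ⟨w, hs, hw⟩)
    · exact ⟨x, Relation.ReflTransGen.refl, hx⟩
    · obtain ⟨u, hru, hu⟩ := hw
      exact ⟨u, Relation.ReflTransGen.head hs hru, hu⟩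
  · rintro ⟨u, hru, hu⟩
    intro Q hQ
    simp only [Set.mem_setOf_eq] at hQ
    rw [hbody] at hQ
    induction hru using Relation.ReflTransGen.head_induction_on with
    | refl => exact hQ (Or.inl hu)
    | head hs _ ihq => exact hQ (Or.inr ⟨_, hs, ihq⟩)

end Chars

section Infra

variable {α : Type*} {R : α → α → Prop}

lemma freq_fiber {β : Type*} [Fintype β] (g : ℕ → β) (I : Set ℕ)
    (hI : ∀ N, ∃ i, N ≤ i ∧ i ∈ I) : ∃ b, ∀ N, ∃ i, N ≤ i ∧ i ∈ I ∧ g i = b := by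
  by_contra hcon
  push_neg at hcon
  choose Nb hNb using hcon
  obtain ⟨i, hi, hiI⟩ := hI (Finset.univ.sup Nb)
  exact hNb (g i) i (le_trans (Finset.le_sup (Finset.mem_univ _)) hi) hiI rfl

lemma transGen_path {x y : α} (h : Relation.TransGen R x y) :
    ∃ (k : ℕ) (p : ℕ → α), 1 ≤ k ∧ p 0 = x ∧ p k = y ∧ ∀ i < k, R (p i) (p (i + 1)) := by
  induction h with
  | @single b hxy =>
    refine ⟨1, fun i => if i = 0 then x else b, le_refl 1, by simp, by simp, ?_⟩
    intro i hi
    interval_cases i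
    simpa using hxy
  | @tail b d _ hbc ih =>
    obtain ⟨k, p, hk, hp0, hpk, hpR⟩ := ih
    refine ⟨k + 1, fun i => if i ≤ k then p i else d, by omega, by simp [hp0], by simp, ?_⟩
    intro i hi
    rcases Nat.lt_or_ge i k with h' | h'
    · simp only [show i ≤ k by omega, show i + 1 ≤ k by omega, if_true]
      exact hpR i h'
    · have : i = k := by omega
      subst this
      simp only [le_refl, if_true, show ¬ (i + 1 ≤ i) by omega, if_false]
      rwa [hpk]

lemma rtg_path {x y : α} (h : Relation.ReflTransGen R x y) :
    ∃ (k : ℕ) (p : ℕ → α), p 0 = x ∧ p k = y ∧ ∀ i < k, R (p i) (p (i + 1)) := by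
  induction h with
  | refl => exact ⟨0, fun _ => x, rfl, rfl, by omega⟩
  | @tail b d _ hbc ih =>
    obtain ⟨k, p, hp0, hpk, hpR⟩ := ih
    refine ⟨k + 1, fun i => if i ≤ k then p i else d, by simp [hp0], by simp, ?_⟩
    intro i hi
    rcases Nat.lt_or_ge i k with h' | h'
    · simp only [show i ≤ k by omega, show i + 1 ≤ k by omega, if_true]
      exact hpR i h'
    · have : i = k := by omega
      subst this
      simp only [le_refl, if_true, show ¬ (i + 1 ≤ i) by omega, if_false]
      rwa [hpk]

lemma flatten (c : ℕ → α) (h : ∀ j, Relation.TransGen R (c j) (c (j + 1))) :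
    ∃ (r : ℕ → α) (σ : ℕ → ℕ), r 0 = c 0 ∧ (∀ i, R (r i) (r (i + 1))) ∧
      StrictMono σ ∧ σ 0 = 0 ∧ ∀ j, r (σ j) = c j := by
  choose k p hk hp0 hpk hpR using fun j => transGen_path (h j)
  classical
  set σ : ℕ → ℕ := fun j => (Finset.range j).sum k with hσ
  have hσ0 : σ 0 = 0 := by simp [hσ]
  have hσsucc : ∀ j, σ (j + 1) = σ j + k j := by
    intro j; simp [hσ, Finset.sum_range_succ]
  have hσmono : StrictMono σ := by
    apply strictMono_nat_of_lt_succ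
    intro j
    have := hk j
    rw [hσsucc]
    omega
  have hσge : ∀ j, j ≤ σ j := fun j => hσmono.le_apply
  set J : ℕ → ℕ := fun i => Nat.findGreatest (fun j => σ j ≤ i) i with hJ
  have hJ1 : ∀ i, σ (J i) ≤ i := by
    intro i
    exact Nat.findGreatest_spec (P := fun j => σ j ≤ i) (Nat.zero_le i) (by show σ 0 ≤ i; omega)
  have hJ2 : ∀ i, i < σ (J i + 1) := by
    intro i
    by_contra hcon
    push_neg at hcon
    have h1 : J i + 1 ≤ i := le_trans (hσge _) hcon
    exact Nat.findGreatest_is_greatest (Nat.lt_succ_self _) h1 hcon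
  have hJuniq : ∀ i j, σ j ≤ i → i < σ (j + 1) → J i = j := by
    intro i j h1 h2
    rcases Nat.lt_trichotomy (J i) j with h' | h' | h'
    · have : σ (J i + 1) ≤ σ j := hσmono.monotone (by omega)
      have := hJ2 i
      omega
    · exact h'
    · have : σ (j + 1) ≤ σ (J i) := hσmono.monotone (by omega)
      have := hJ1 i
      omega
  set r : ℕ → α := fun i => p (J i) (i - σ (J i)) with hr
  have hrmark : ∀ j, r (σ j) = c j := by
    intro j
    have : J (σ j) = j := hJuniq _ _ (le_refl _) (hσmono (Nat.lt_succ_self j))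
    simp [hr, this, hp0]
  refine ⟨r, σ, by rw [← hσ0]; exact hrmark 0, ?_, hσmono, hσ0, hrmark⟩
  · intro i
    have h1 := hJ1 i
    have h2 := hJ2 i
    have hks := hσsucc (J i)
    rcases Nat.lt_or_ge (i + 1) (σ (J i + 1)) with hlt | hge
    · have hJeq : J (i + 1) = J i := hJuniq _ _ (by omega) hlt
      have hidx : i + 1 - σ (J i) = (i - σ (J i)) + 1 := by omega
      have hstep := hpR (J i) (i - σ (J i)) (by omega)
      have e1 : r (i + 1) = p (J i) (i - σ (J i) + 1) := by
        show p (J (i + 1)) (i + 1 - σ (J (i + 1))) = _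
        rw [hJeq, hidx]
      rw [e1]
      exact hstep
    · have heq : i + 1 = σ (J i + 1) := by omega
      have hJeq : J (i + 1) = J i + 1 := by
        apply hJuniq
        · omega
        · have : σ (J i + 1) < σ (J i + 1 + 1) := hσmono (Nat.lt_succ_self _)
          omega
      have hidx : i - σ (J i) + 1 = k (J i) := by omega
      have hstep := hpR (J i) (i - σ (J i)) (by omega)
      rw [hidx] at hstep
      have e1 : r (i + 1) = p (J i) (k (J i)) := by
        rw [heq, hrmark (J i + 1), ← hpk]
      rw [e1]
      exact hstep

lemma chain_tg {r : ℕ → α} {N : ℕ} (hstep : ∀ t, N ≤ t → R (r t) (r (t + 1))) :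
    ∀ i j, N ≤ i → i < j → Relation.TransGen R (r i) (r j) := by
  intro i j hNi hij
  induction j, hij using Nat.le_induction with
  | base => exact Relation.TransGen.single (hstep i hNi)
  | succ j hij ih => exact Relation.TransGen.tail ih (hstep j (by omega))

lemma chain_rtg {r : ℕ → α} (hstep : ∀ t, R (r t) (r (t + 1))) :
    ∀ i j, i ≤ j → Relation.ReflTransGen R (r i) (r j) := by
  intro i j hij
  induction j, hij using Nat.le_induction with
  | base => exact Relation.ReflTransGen.refl
  | succ j hij ih => exact Relation.ReflTransGen.tail ih (hstep j)

end Infra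

section Automata

variable {Alph : Type}

lemma maxinf_exists (C : LTS Alph ℕ) [Fintype C.S] (hC : IsParityAutomaton C) (r : ℕ → C.S) :
    ∃ k, InfOften C r k ∧ ∀ j, InfOften C r j → j ≤ k := by
  classical
  choose pC hpC using hC
  have hmem : ∀ (s : C.S) (k : ℕ), k ∈ C.rho s ↔ k = pC s := by
    intro s k; rw [hpC s]; exact Set.mem_singleton_iff
  obtain ⟨s₀, hs₀⟩ := freq_fiber r Set.univ (fun N => ⟨N, le_refl N, trivial⟩)
  set F : Finset C.S := Finset.univ.filter (fun s => ∀ N, ∃ i, N ≤ i ∧ r i = s) with hF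
  have hs₀F : s₀ ∈ F := by
    simp only [hF, Finset.mem_filter, Finset.mem_univ, true_and]
    intro N; obtain ⟨i, h1, -, h2⟩ := hs₀ N; exact ⟨i, h1, h2⟩
  have hne : (F.image pC).Nonempty := ⟨pC s₀, Finset.mem_image_of_mem _ hs₀F⟩
  refine ⟨(F.image pC).max' hne, ?_, ?_⟩
  · obtain ⟨s, hsF, hs⟩ := Finset.mem_image.1 ((F.image pC).max'_mem hne)
    intro N
    simp only [hF, Finset.mem_filter, Finset.mem_univ, true_and] at hsF
    obtain ⟨i, h1, h2⟩ := hsF N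
    exact ⟨i, h1, by rw [h2, hmem]; exact hs.symm⟩
  · intro j hj
    obtain ⟨s, hs⟩ := freq_fiber r {i | j ∈ C.rho (r i)}
      (fun N => by obtain ⟨i, h1, h2⟩ := hj N; exact ⟨i, h1, h2⟩)
    have hsF : s ∈ F := by
      simp only [hF, Finset.mem_filter, Finset.mem_univ, true_and]
      intro N; obtain ⟨i, h1, -, h2⟩ := hs N; exact ⟨i, h1, h2⟩
    obtain ⟨i, -, hiI, hieq⟩ := hs 0
    have : j = pC s := by rw [← hieq]; exact (hmem _ _).1 hiI
    rw [this]
    exact Finset.le_max' _ _ (Finset.mem_image_of_mem _ hsF)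

lemma eventually_le (C : LTS Alph ℕ) [Fintype C.S] (hC : IsParityAutomaton C) (r : ℕ → C.S)
    (k : ℕ) (hmax : ∀ j, InfOften C r j → j ≤ k) :
    ∃ N, ∀ i, N ≤ i → ∀ j ∈ C.rho (r i), j ≤ k := by
  classical
  by_contra hcon
  push_neg at hcon
  choose pC hpC using hC
  have hmem : ∀ (s : C.S) (j : ℕ), j ∈ C.rho s ↔ j = pC s := by
    intro s j; rw [hpC s]; exact Set.mem_singleton_iff
  obtain ⟨s, hs⟩ := freq_fiber r {i | ∃ j ∈ C.rho (r i), k < j}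
    (fun N => by obtain ⟨i, h1, j, h2, h3⟩ := hcon N; exact ⟨i, h1, j, h2, h3⟩)
  obtain ⟨i, -, hiI, hieq⟩ := hs 0
  obtain ⟨j, hj1, hj2⟩ := hiI
  have hjs : j = pC s := by rw [← hieq]; exact (hmem _ _).1 hj1
  have hinf : InfOften C r j := by
    intro N
    obtain ⟨i', h1, -, hieq'⟩ := hs N
    exact ⟨i', h1, by rw [hmem, hieq', ← hjs]⟩
  have := hmax j hinf
  omega

end Automata

/-- for parity automata `A`, `B` over a finite alphabet, with `B`
deterministic and complete, `L(A) ⊄ L(B)` iff there are an even `n` and an odd `m` such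
that `φ_{n,m}` holds in the disjoint union `L_{A,B}` at the valuation sending `x`, `y`
to the two initial states. -/
theorem parity_noninclusion_iff_phiNM {Alph : Type} [Fintype Alph] (A B : LTS Alph ℕ)
    [Fintype A.S] [Fintype B.S] (hA : IsParityAutomaton A) (hB : IsParityAutomaton B)
    (hdet : Deterministic B) (hcomp : Complete B)
    (v : Fin 2 → (dunion A B).S) (hvx : v 0 = .inl A.s0) (hvy : v 1 = .inr B.s0) :
    ¬ ParityLang A ⊆ ParityLang B ↔
      ∃ n m : ℕ, Even n ∧ Odd m ∧ v ∈ sem (dunion A B) (phiNM n m) (fun _ => ∅) := by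
  classical
  obtain ⟨pA, hpA⟩ := Classical.axiomOfChoice hA
  obtain ⟨pB, hpB⟩ := Classical.axiomOfChoice hB
  have memA : ∀ (s : A.S) (k : ℕ), k ∈ A.rho s ↔ k = pA s := by
    intro s k; rw [hpA s]; exact Set.mem_singleton_iff
  have memB : ∀ (s : B.S) (k : ℕ), k ∈ B.rho s ↔ k = pB s := by
    intro s k; rw [hpB s]; exact Set.mem_singleton_iff
  constructor
  · intro hnotsub
    obtain ⟨w, hwA, hwB⟩ := Set.not_subset.1 hnotsub
    obtain ⟨rA, hrunA, n, hneven, hninf, hnmax⟩ := hwA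
    choose f hf using hcomp
    set rB : ℕ → B.S := fun i => Nat.rec B.s0 (fun i s => f s (w i)) i with hrBdef
    have hrunB : IsRun B w rB := ⟨rfl, fun i => hf _ _⟩
    obtain ⟨m, hminf, hmmax⟩ := maxinf_exists B hB rB
    have hmodd : Odd m := by
      rcases Nat.even_or_odd m with he | ho
      · exact absurd ⟨rB, hrunB, m, he, hminf, hmmax⟩ hwB
      · exact ho
    obtain ⟨NA, hNA⟩ := eventually_le A hA rA n hnmax
    obtain ⟨NB, hNB⟩ := eventually_le B hB rB m hmmax
    set N := max NA NB with hN
    set r : ℕ → (Fin 2 → (dunion A B).S) :=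
      fun i => fun x => if x = 0 then Sum.inl (rA i) else Sum.inr (rB i) with hrdef
    have hr0 : ∀ i, r i 0 = Sum.inl (rA i) := fun i => by simp [hrdef] <;> rfl
    have hr1 : ∀ i, r i 1 = Sum.inr (rB i) := fun i => by simp [hrdef] <;> rfl
    have hvr : v = r 0 := by
      apply val_ext
      · rw [hvx, hr0, hrunA.1]
      · rw [hvy, hr1]; rfl
    have hSs : ∀ i, SStep (dunion A B) (r i) (r (i + 1)) := by
      intro i
      refine ⟨w i, ?_, ?_⟩
      · rw [hr0, hr0]; exact hrunA.2 i
      · rw [hr1, hr1]; exact hrunB.2 i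
    have hBs : ∀ t, N ≤ t → BStep (dunion A B) n m (r t) (r (t + 1)) := by
      intro t ht
      refine ⟨hSs t, ⟨pA (rA (t + 1)), ?_, ?_⟩, ⟨pB (rB (t + 1)), ?_, ?_⟩⟩
      · exact hNA (t + 1) (by omega) _ ((memA _ _).2 rfl)
      · rw [hr0]; exact (memA _ _).2 rfl
      · exact hNB (t + 1) (by omega) _ ((memB _ _).2 rfl)
      · rw [hr1]; exact (memB _ _).2 rfl
    have hnpos : ∀ t, ∃ i, t < i ∧ pA (rA i) = n := by
      intro t
      obtain ⟨i, h1, h2⟩ := hninf (t + 1)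
      exact ⟨i, by omega, ((memA _ _).1 h2).symm⟩
    have hmpos : ∀ t, ∃ i, t < i ∧ pB (rB i) = m := by
      intro t
      obtain ⟨i, h1, h2⟩ := hminf (t + 1)
      exact ⟨i, by omega, ((memB _ _).1 h2).symm⟩
    choose fa hfa1 hfa2 using hnpos
    choose fb hfb1 hfb2 using hmpos
    set b : ℕ → ℕ := fun j => Nat.rec N (fun _ prev => fb (fa prev)) j with hbdef
    have hb0 : b 0 = N := rfl
    have hbsucc : ∀ j, b (j + 1) = fb (fa (b j)) := fun j => rfl
    have hbge : ∀ j, N ≤ b j := by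
      intro j
      induction j with
      | zero => exact le_refl N
      | succ j ih =>
        have h1 := hfa1 (b j)
        have h2 := hfb1 (fa (b j))
        rw [hbsucc]
        omega
    refine ⟨n, m, hneven, hmodd, ?_⟩
    rw [mem_sem_phiNM]
    refine ⟨r N, ?_, fun j => r (b j), by show r (b 0) = r N; rw [hb0], ?_⟩
    · rw [hvr]; exact chain_rtg hSs 0 N (Nat.zero_le N)
    · intro j
      refine ⟨r (fa (b j)), chain_tg hBs (b j) (fa (b j)) (hbge j) (hfa1 _), ?_, ?_, ?_⟩
      · rw [hr0]; exact (memA _ _).2 (hfa2 _).symm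
      · show Relation.TransGen (BStep (dunion A B) n m) (r (fa (b j))) (r (b (j + 1)))
        rw [hbsucc]
        refine chain_tg hBs (fa (b j)) (fb (fa (b j))) ?_ (hfb1 _)
        have h1 := hfa1 (b j)
        have h2 := hbge j
        omega
      · show m ∈ (dunion A B).rho (r (b (j + 1)) 1)
        rw [hr1]; exact (memB _ _).2 (hfb2 _).symm
  · rintro ⟨n, m, hneven, hmodd, hvsem⟩
    rw [mem_sem_phiNM] at hvsem
    obtain ⟨u, hru, c, hc0, hc⟩ := hvsem
    choose uu hu1 hu2 hu3 hu4 using hc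
    set e : ℕ → (Fin 2 → (dunion A B).S) :=
      fun t => if t % 2 = 0 then c (t / 2) else uu (t / 2) with hedef
    have hetg : ∀ t, Relation.TransGen (BStep (dunion A B) n m) (e t) (e (t + 1)) := by
      intro t
      rcases Nat.even_or_odd t with ⟨j, hj⟩ | ⟨j, hj⟩
      · have e1 : e t = c j := by
          rw [hedef]; simp only [show t % 2 = 0 by omega, if_true, show t / 2 = j by omega]
        have e2 : e (t + 1) = uu j := by
          rw [hedef]
          simp only [show (t + 1) % 2 = 1 by omega, show (t + 1) / 2 = j by omega]
          norm_num
        rw [e1, e2]; exact hu1 j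
      · have e1 : e t = uu j := by
          rw [hedef]
          simp only [show t % 2 = 1 by omega, show t / 2 = j by omega]
          norm_num
        have e2 : e (t + 1) = c (j + 1) := by
          rw [hedef]
          simp only [show (t + 1) % 2 = 0 by omega, if_true, show (t + 1) / 2 = j + 1 by omega]
        rw [e1, e2]; exact hu3 j
    obtain ⟨r', σ, hr'0, hr'step, hσmono, hσ0, hmark⟩ := flatten e hetg
    obtain ⟨l, q, hq0, hql, hqR⟩ := rtg_path hru
    set r : ℕ → (Fin 2 → (dunion A B).S) :=
      fun i => if i < l then q i else r' (i - l) with hrdef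
    have hrl : ∀ t, r (l + t) = r' t := by
      intro t
      rw [hrdef]
      simp only [show ¬ (l + t < l) by omega, if_false, show l + t - l = t by omega]
    have he0 : e 0 = u := by simp [hedef, hc0]
    have hr0v : r 0 = v := by
      rcases Nat.eq_zero_or_pos l with hl | hl
      · have : r 0 = r' 0 := by rw [hrdef]; simp [hl]
        rw [this, hr'0, he0, ← hql, hl, hq0]
      · rw [hrdef]; simp only [hl, if_true]; exact hq0
    have hstepS : ∀ i, SStep (dunion A B) (r i) (r (i + 1)) := by
      intro i
      rcases Nat.lt_trichotomy (i + 1) l with h' | h' | h'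
      · have e1 : r i = q i := by rw [hrdef]; simp [show i < l by omega]
        have e2 : r (i + 1) = q (i + 1) := by rw [hrdef]; simp [h']
        rw [e1, e2]; exact hqR i (by omega)
      · have e1 : r i = q i := by rw [hrdef]; simp [show i < l by omega]
        have e2 : r (i + 1) = q (i + 1) := by
          have : r (i + 1) = r' 0 := by rw [hrdef]; simp [show ¬ (i + 1 < l) by omega, h']
          rw [this, hr'0, he0, ← hql, h']
        rw [e1, e2]; exact hqR i (by omega)
      · have e1 : r i = r' (i - l) := by rw [hrdef]; simp [show ¬ (i < l) by omega]
        have e2 : r (i + 1) = r' (i - l + 1) := by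
          rw [hrdef]
          simp only [show ¬ (i + 1 < l) by omega, if_false, show i + 1 - l = i - l + 1 by omega]
        rw [e1, e2]; exact (hr'step (i - l)).1
    have hbound : ∀ i, l + 1 ≤ i →
        (∃ k ≤ n, k ∈ (dunion A B).rho (r i 0)) ∧ ∃ k ≤ m, k ∈ (dunion A B).rho (r i 1) := by
      intro i hi
      have e1 : r i = r' (i - l) := by
        rw [hrdef]; simp only [show ¬ (i < l) by omega, if_false]
      have h3 : i - l - 1 + 1 = i - l := by omega
      have hstep := hr'step (i - l - 1)
      rw [h3, ← e1] at hstep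
      exact ⟨hstep.2.1, hstep.2.2⟩
    have hproj : ∀ i, ∃ sa sb, r i 0 = Sum.inl sa ∧ r i 1 = Sum.inr sb := by
      intro i
      induction i with
      | zero => exact ⟨A.s0, B.s0, by rw [hr0v]; exact hvx, by rw [hr0v]; exact hvy⟩
      | succ i ih =>
        obtain ⟨sa, sb, h0, h1⟩ := ih
        obtain ⟨a, ht0, ht1⟩ := hstepS i
        rw [h0] at ht0
        rw [h1] at ht1
        have h0' : ∃ sa', r (i + 1) 0 = Sum.inl sa' := by
          cases hx : r (i + 1) 0 with
          | inl t => exact ⟨t, rfl⟩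
          | inr t => rw [hx] at ht0; exact ht0.elim
        have h1' : ∃ sb', r (i + 1) 1 = Sum.inr sb' := by
          cases hx : r (i + 1) 1 with
          | inl t => rw [hx] at ht1; exact ht1.elim
          | inr t => exact ⟨t, rfl⟩
        obtain ⟨sa', h0'⟩ := h0'
        obtain ⟨sb', h1'⟩ := h1'
        exact ⟨sa', sb', h0', h1'⟩
    choose rA rB hprA hprB using hproj
    choose wa hwa0 hwa1 using hstepS
    have hstepA : ∀ i, A.Tr (rA i) (wa i) (rA (i + 1)) := by
      intro i
      have h := hwa0 i
      rw [hprA i, hprA (i + 1)] at h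
      exact h
    have hstepB : ∀ i, B.Tr (rB i) (wa i) (rB (i + 1)) := by
      intro i
      have h := hwa1 i
      rw [hprB i, hprB (i + 1)] at h
      exact h
    have hrA0 : rA 0 = A.s0 := by
      have h := hprA 0
      rw [hr0v, hvx] at h
      exact (Sum.inl.inj h.symm)
    have hrB0 : rB 0 = B.s0 := by
      have h := hprB 0
      rw [hr0v, hvy] at h
      exact (Sum.inr.inj h.symm)
    -- marks
    have hApos : ∀ j, n ∈ A.rho (rA (l + σ (2 * j + 1))) := by
      intro j
      have e1 : r (l + σ (2 * j + 1)) = uu j := by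
        rw [hrl, hmark, hedef]
        simp only [show (2 * j + 1) % 2 = 1 by omega, show (2 * j + 1) / 2 = j by omega]
        norm_num
      have h := hu2 j
      rw [← e1, hprA] at h
      exact h
    have hBpos : ∀ j, m ∈ B.rho (rB (l + σ (2 * j + 2))) := by
      intro j
      have e1 : r (l + σ (2 * j + 2)) = c (j + 1) := by
        rw [hrl, hmark, hedef]
        simp only [show (2 * j + 2) % 2 = 0 by omega, if_true, show (2 * j + 2) / 2 = j + 1 by omega]
      have h := hu4 j
      rw [← e1, hprB] at h
      exact h
    have hInfA : InfOften A rA n := by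
      intro N
      refine ⟨l + σ (2 * N + 1), ?_, hApos N⟩
      have : 2 * N + 1 ≤ σ (2 * N + 1) := hσmono.le_apply
      omega
    have hmaxA : ∀ j, InfOften A rA j → j ≤ n := by
      intro j hj
      obtain ⟨i, hi, hmem⟩ := hj (l + 1)
      obtain ⟨k, hk, hkmem⟩ := (hbound i hi).1
      rw [hprA i] at hkmem
      have h1 := (memA _ _).1 hkmem
      have h2 := (memA _ _).1 hmem
      omega
    have hInfB : InfOften B rB m := by
      intro N
      refine ⟨l + σ (2 * N + 2), ?_, hBpos N⟩
      have : 2 * N + 2 ≤ σ (2 * N + 2) := hσmono.le_apply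
      omega
    have hmaxB : ∀ j, InfOften B rB j → j ≤ m := by
      intro j hj
      obtain ⟨i, hi, hmem⟩ := hj (l + 1)
      obtain ⟨k, hk, hkmem⟩ := (hbound i hi).2
      rw [hprB i] at hkmem
      have h1 := (memB _ _).1 hkmem
      have h2 := (memB _ _).1 hmem
      omega
    apply Set.not_subset.2
    refine ⟨wa, ⟨rA, ⟨hrA0, hstepA⟩, n, hneven, hInfA, hmaxA⟩, ?_⟩
    rintro ⟨r2, hrun2, k2, hk2even, hk2inf, hk2max⟩
    have hr2eq : ∀ i, r2 i = rB i := by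
      intro i
      induction i with
      | zero => rw [hrun2.1, hrB0]
      | succ i ih =>
        have h1 := hrun2.2 i
        rw [ih] at h1
        exact hdet _ _ _ _ h1 (hstepB i)
    have h1 : k2 ≤ m := by
      apply hmaxB
      intro N
      obtain ⟨i, hi, hmem⟩ := hk2inf N
      rw [hr2eq] at hmem
      exact ⟨i, hi, hmem⟩
    have h2 : m ≤ k2 := by
      apply hk2max
      intro N
      obtain ⟨i, hi, hmem⟩ := hInfB N
      rw [← hr2eq] at hmem
      exact ⟨i, hi, hmem⟩
    have : m = k2 := le_antisymm h2 h1
    rw [this] at hmodd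
    exact (Nat.not_odd_iff_even.2 hk2even) hmodd
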